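/- Let S be a finite set of positive integers and 𝔥 = {T ⊆ S : T ≠ ∅, ∏_{s∈T} s is a perfect square}. Then ∑_{T∈𝔥} (−1)^{#T} equals either −1 or #𝔥. -/
import Mathlib

open symmDiff

lemma sq_of_mul_sq {a b : ℕ} (hb : b ≠ 0) (h : IsSquare (a * b ^ 2)) : IsSquare a := by
  obtain ⟨x, hx⟩ := h
  have hx' : a * b ^ 2 = x ^ 2 := by rw [hx, sq]
  have hdvd : b ∣ x := by
    rw [← Nat.pow_dvd_pow_iff (two_ne_zero)]
    exact ⟨a, by linarith [hx']⟩
  obtain ⟨c, rfl⟩ := hdvd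
  have : a * b ^ 2 = c ^ 2 * b ^ 2 := by rw [hx']; ring
  have ha : a = c ^ 2 := Nat.eq_of_mul_eq_mul_right (by positivity) this
  exact ⟨c, by rw [ha, sq]⟩

lemma card_symmDiff_aux (T U : Finset ℕ) :
    (T ∆ U).card + 2 * (T ∩ U).card = T.card + U.card := by
  classical
  have h1 : (T ∆ U).card = (T \ U).card + (U \ T).card := by
    have he : T ∆ U = (T \ U) ∪ (U \ T) := by
      ext x; simp [Finset.mem_symmDiff]
    rw [he, Finset.card_union_of_disjoint disjoint_sdiff_sdiff]
  have h2 : (T \ U).card + (T ∩ U).card = T.card := by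
    rw [Finset.card_sdiff_add_card_inter]
  have h3 : (U \ T).card + (U ∩ T).card = U.card := by
    rw [Finset.card_sdiff_add_card_inter]
  rw [Finset.inter_comm] at h3
  omega

lemma prod_symmDiff_aux (T U : Finset ℕ) :
    (∏ s ∈ T ∆ U, s) * (∏ s ∈ T ∩ U, s) ^ 2 = (∏ s ∈ T, s) * (∏ s ∈ U, s) := by
  classical
  have hu : T ∪ U = (T ∆ U) ∪ (T ∩ U) := by
    ext x; simp [Finset.mem_symmDiff]; tauto
  have hdisj : Disjoint (T ∆ U) (T ∩ U) := by
    rw [Finset.disjoint_left]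
    intro a ha hb
    rw [Finset.mem_symmDiff] at ha
    simp only [Finset.mem_inter] at hb
    tauto
  have := Finset.prod_union_inter (s₁ := T) (s₂ := U) (f := fun s => s)
  rw [hu, Finset.prod_union hdisj] at this
  rw [← this]; ring

theorem stmt_5 (S : Finset ℕ) (hpos : ∀ s ∈ S, 0 < s)
    (H : Finset (Finset ℕ))
    (hH : H = S.powerset.filter (fun T => T.Nonempty ∧ IsSquare (∏ s ∈ T, s))) :
    (∑ T ∈ H, (-1 : ℤ) ^ T.card) = -1 ∨
      (∑ T ∈ H, (-1 : ℤ) ^ T.card) = H.card := by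
  classical
  have hempty : (∅ : Finset ℕ) ∉ H := by
    rw [hH]; simp
  set G : Finset (Finset ℕ) := insert ∅ H with hG
  have hmem : ∀ T ∈ G, T ⊆ S ∧ IsSquare (∏ s ∈ T, s) := by
    intro T hT
    rcases Finset.mem_insert.1 hT with rfl | hT
    · exact ⟨Finset.empty_subset _, by simp⟩
    · rw [hH] at hT
      simp only [Finset.mem_filter, Finset.mem_powerset] at hT
      exact ⟨hT.1, hT.2.2⟩
  have hclosed : ∀ T ∈ G, ∀ U ∈ G, T ∆ U ∈ G := by
    intro T hT U hU
    obtain ⟨hTS, hTsq⟩ := hmem T hT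
    obtain ⟨hUS, hUsq⟩ := hmem U hU
    rcases eq_or_ne (T ∆ U) ∅ with he | hne
    · rw [he]; exact Finset.mem_insert_self _ _
    · refine Finset.mem_insert_of_mem ?_
      rw [hH]
      simp only [Finset.mem_filter, Finset.mem_powerset]
      have hsub : T ∆ U ⊆ S := by
        intro x hx
        rw [Finset.mem_symmDiff] at hx
        rcases hx with ⟨h1, _⟩ | ⟨h1, _⟩
        · exact hTS h1
        · exact hUS h1
      refine ⟨hsub, Finset.nonempty_of_ne_empty hne, ?_⟩
      have hIne : (∏ s ∈ T ∩ U, s) ≠ 0 := by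
        apply Finset.prod_ne_zero_iff.2
        intro s hs
        exact (hpos s (hTS (Finset.mem_inter.1 hs).1)).ne'
      apply sq_of_mul_sq hIne
      rw [prod_symmDiff_aux]
      exact hTsq.mul hUsq
  by_cases hev : ∀ T ∈ H, Even T.card
  · right
    rw [Finset.sum_congr rfl (fun T hT => (hev T hT).neg_one_pow)]
    simp
  · left
    push_neg at hev
    obtain ⟨U, hU, hUodd⟩ := hev
    rw [Nat.not_even_iff_odd] at hUodd
    have hUG : U ∈ G := Finset.mem_insert_of_mem hU
    have hGzero : (∑ T ∈ G, (-1 : ℤ) ^ T.card) = 0 := by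
      apply Finset.sum_involution (g := fun T _ => T ∆ U)
      · intro T hT
        have hc := card_symmDiff_aux T U
        have : (-1 : ℤ) ^ (T ∆ U).card = (-1) ^ (T.card + U.card) := by
          have : (-1 : ℤ) ^ (T.card + U.card) = (-1) ^ ((T ∆ U).card + 2 * (T ∩ U).card) := by
            rw [hc]
          rw [this, pow_add, pow_mul]; simp
        rw [this, pow_add, hUodd.neg_one_pow]; ring
      · intro T hT _
        intro heq
        have : U = ∅ := by
          have := symmDiff_eq_left.1 heq
          simpa using this
        rw [this] at hUodd
        simp at hUodd
      · intro T hT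
        exact hclosed T hT U hUG
      · intro T hT
        exact symmDiff_symmDiff_cancel_right U T
    have : (∑ T ∈ G, (-1 : ℤ) ^ T.card) = 1 + ∑ T ∈ H, (-1 : ℤ) ^ T.card := by
      rw [hG, Finset.sum_insert hempty]; simp
    rw [this] at hGzero
    linarith
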